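/- The product on 𝔄_* defined by b_Λ · b_Γ = (−1)^{ε(∩Λ, ∩Γ)} b_{Λ⊎Γ} when Λ and Γ are compatible, and 0 otherwise, is associative. -/

import Mathlib

/-- Generators of 𝔄_*: ordered collections Λ = (λ_1, ..., λ_r) of finite subsets of ℤ_{>0}. -/
abbrev Gen := List (Finset ℕ)

/-- The vector space 𝔄_* spanned over ℚ by the generators `b_Λ`. -/
abbrev 𝔄 := Gen →₀ ℚ

/-- Inversion count `ε(A,B) = Σ_{a∈A} |{b ∈ B : b < a}|`. -/
def eps (A B : Finset ℕ) : ℕ := ∑ a ∈ A, (B.filter (· < a)).card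

/-- The (1-based) rank of `a` in the increasingly ordered finite set `T`. -/
def rankIn (T : Finset ℕ) (a : ℕ) : ℕ := (T.filter (· ≤ a)).card

/-- `⋃Λ`. -/
def unionAll (Λ : Gen) : Finset ℕ := Λ.foldr (· ∪ ·) ∅

/-- `⋂Λ` (with `⋂` of the empty collection taken to be `∅`). -/
def interAll : Gen → Finset ℕ
  | [] => ∅
  | a :: t => t.foldr (· ∩ ·) a

/-- Λ and Γ are compatible if one is empty, or they have the same number of elements and
`(⋃Λ) ∩ (⋃Γ) = ∅`. -/
def Compatible (Λ Γ : Gen) : Prop :=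
  Λ = [] ∨ Γ = [] ∨ (Λ.length = Γ.length ∧ Disjoint (unionAll Λ) (unionAll Γ))

/-- `Λ ⊎ Γ = (λ_1 ∪ γ_1, ..., λ_r ∪ γ_r)`. -/
def uplus : Gen → Gen → Gen
  | [], Γ => Γ
  | Λ, [] => Λ
  | Λ, Γ => List.zipWith (· ∪ ·) Λ Γ

-- The product on generators: `b_Λ b_Γ = (−1)^{ε(∩Λ,∩Γ)} b_{Λ⊎Γ}` if Λ and Γ are
-- compatible, and `0` otherwise.
open Classical in
noncomputable def mulGen (Λ Γ : Gen) : 𝔄 :=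
  if Compatible Λ Γ then
    ((-1 : ℚ) ^ eps (interAll Λ) (interAll Γ)) • Finsupp.single (uplus Λ Γ) 1
  else 0

/-- The bilinear extension of the product to 𝔄_*. -/
noncomputable def mulA : 𝔄 →ₗ[ℚ] 𝔄 →ₗ[ℚ] 𝔄 :=
  Finsupp.lift (𝔄 →ₗ[ℚ] 𝔄) ℚ Gen fun Λ => Finsupp.lift 𝔄 ℚ Gen fun Γ => mulGen Λ Γ

/-- The simplicial differential `δ(b_Λ) = Σ_i (−1)^i b_{(∩Λ ∖ α_i, Λ̂)}`: removing
`α ∈ ⋂Λ` from the intersection replaces each `λ_j` by `λ_j ∖ {α}`. -/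
noncomputable def deltaA : 𝔄 →ₗ[ℚ] 𝔄 :=
  Finsupp.lift 𝔄 ℚ Gen fun Λ =>
    ∑ α ∈ interAll Λ,
      ((-1 : ℚ) ^ rankIn (interAll Λ) α) • Finsupp.single (Λ.map (·.erase α)) 1

-- basic lemmas
lemma mem_unionAll {L : Gen} {x : ℕ} : x ∈ unionAll L ↔ ∃ s ∈ L, x ∈ s := by
  induction L with
  | nil => simp [unionAll]
  | cons a t ih => simp [unionAll] at ih ⊢; rw [ih]

lemma mem_interAll {a : Finset ℕ} {t : Gen} {x : ℕ} :
    x ∈ interAll (a :: t) ↔ x ∈ a ∧ ∀ s ∈ t, x ∈ s := by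
  induction t with
  | nil => simp [interAll]
  | cons b s ih =>
    simp only [interAll, List.foldr_cons] at ih ⊢
    simp only [Finset.mem_inter, ih, List.mem_cons]
    constructor
    · rintro ⟨hb, ha, hs⟩
      exact ⟨ha, fun u hu => by rcases hu with rfl | hu; exact hb; exact hs u hu⟩
    · rintro ⟨ha, hs⟩
      exact ⟨hs b (.inl rfl), ha, fun u hu => hs u (.inr hu)⟩

lemma eps_empty_left (B : Finset ℕ) : eps ∅ B = 0 := by simp [eps]
lemma eps_empty_right (A : Finset ℕ) : eps A ∅ = 0 := by simp [eps]

lemma eps_union_left {A B : Finset ℕ} (C : Finset ℕ) (h : Disjoint A B) :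
    eps (A ∪ B) C = eps A C + eps B C := by
  simp [eps, Finset.sum_union h]

lemma eps_union_right (A : Finset ℕ) {B C : Finset ℕ} (h : Disjoint B C) :
    eps A (B ∪ C) = eps A B + eps A C := by
  simp only [eps, Finset.filter_union]
  rw [← Finset.sum_add_distrib]
  refine Finset.sum_congr rfl fun a _ => ?_
  exact Finset.card_union_of_disjoint (h.mono (Finset.filter_subset _ _) (Finset.filter_subset _ _))

lemma unionAll_cons (a : Finset ℕ) (t : Gen) : unionAll (a :: t) = a ∪ unionAll t := rfl

lemma unionAll_zipWith : ∀ {Λ Γ : Gen}, Λ.length = Γ.length →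
    unionAll (List.zipWith (· ∪ ·) Λ Γ) = unionAll Λ ∪ unionAll Γ
  | [], [], _ => by simp [unionAll]
  | a :: t, b :: s, h => by
    simp only [List.length_cons, Nat.succ_inj] at h
    simp only [List.zipWith_cons_cons, unionAll_cons, unionAll_zipWith h]
    ac_rfl

lemma zipWith_union_assoc : ∀ (Λ Γ Θ : Gen),
    List.zipWith (· ∪ ·) (List.zipWith (· ∪ ·) Λ Γ) Θ
      = List.zipWith (· ∪ ·) Λ (List.zipWith (· ∪ ·) Γ Θ)
  | [], _, _ => by simp
  | _ :: _, [], _ => by simp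
  | _ :: _, _ :: _, [] => by simp
  | a :: t, b :: s, c :: u => by
    simp only [List.zipWith_cons_cons, zipWith_union_assoc t s u, Finset.union_assoc]

lemma interAll_subset_unionAll : ∀ {L : Gen}, L ≠ [] → interAll L ⊆ unionAll L
  | a :: t, _ => by
    intro x hx
    rw [mem_interAll] at hx
    exact mem_unionAll.2 ⟨a, List.mem_cons_self, hx.1⟩

lemma interAll_zipWith : ∀ {Λ Γ : Gen}, Λ ≠ [] → Λ.length = Γ.length →
    Disjoint (unionAll Λ) (unionAll Γ) →
    interAll (List.zipWith (· ∪ ·) Λ Γ) = interAll Λ ∪ interAll Γ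
  | a :: t, b :: s, _, h, hd => by
    simp only [List.length_cons, Nat.succ_inj] at h
    ext x
    simp only [List.zipWith_cons_cons, mem_interAll, Finset.mem_union]
    constructor
    · rintro ⟨hab, hall⟩
      -- every element of zipWith t s is of form u ∪ v with u ∈ t, v ∈ s
      by_cases hxΓ : x ∈ unionAll (b :: s)
      · -- x not in any element of a :: t
        have hxΛ : x ∉ unionAll (a :: t) := fun hc => Finset.disjoint_left.1 hd hc hxΓ
        right
        refine ⟨?_, ?_⟩
        · rcases hab with h' | h'
          · exact absurd (mem_unionAll.2 ⟨a, List.mem_cons_self, h'⟩) hxΛ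
          · exact h'
        · intro v hv
          -- get index
          rw [List.mem_iff_getElem] at hv
          obtain ⟨i, hi, rfl⟩ := hv
          have hi' : i < (List.zipWith (· ∪ ·) t s).length := by
            simp [List.length_zipWith, h] at hi ⊢; omega
          have := hall _ (List.getElem_mem hi')
          rw [List.getElem_zipWith] at this
          rcases Finset.mem_union.1 this with h' | h'
          · exact absurd (mem_unionAll.2 ⟨t[i], List.mem_cons.2 (.inr (List.getElem_mem _)), h'⟩) hxΛ
          · exact h'
      · left
        have hxs : ∀ v ∈ b :: s, x ∉ v := fun v hv hc => hxΓ (mem_unionAll.2 ⟨v, hv, hc⟩)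
        refine ⟨?_, ?_⟩
        · rcases hab with h' | h'
          · exact h'
          · exact absurd h' (hxs b (List.mem_cons_self))
        · intro u hu
          rw [List.mem_iff_getElem] at hu
          obtain ⟨i, hi, rfl⟩ := hu
          have hi' : i < (List.zipWith (· ∪ ·) t s).length := by
            simp [List.length_zipWith, h] at hi ⊢; omega
          have := hall _ (List.getElem_mem hi')
          rw [List.getElem_zipWith] at this
          rcases Finset.mem_union.1 this with h' | h'
          · exact h'
          · have his : i < s.length := by omega
            exact absurd h' (hxs s[i] (List.mem_cons.2 (.inr (List.getElem_mem _))))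
    · rintro (⟨ha, ht⟩ | ⟨hb, hs⟩)
      · refine ⟨Or.inl ha, fun v hv => ?_⟩
        rw [List.mem_iff_getElem] at hv
        obtain ⟨i, hi, rfl⟩ := hv
        rw [List.getElem_zipWith]
        exact Finset.mem_union_left _ (ht _ (List.getElem_mem _))
      · refine ⟨Or.inr hb, fun v hv => ?_⟩
        rw [List.mem_iff_getElem] at hv
        obtain ⟨i, hi, rfl⟩ := hv
        rw [List.getElem_zipWith]
        exact Finset.mem_union_right _ (hs _ (List.getElem_mem _))

lemma uplus_nil_left : ∀ Γ : Gen, uplus [] Γ = Γ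
  | [] => rfl
  | _ :: _ => rfl
lemma uplus_nil_right : ∀ Λ : Gen, uplus Λ [] = Λ
  | [] => rfl
  | _ :: _ => rfl
lemma uplus_of_ne : ∀ {Λ Γ : Gen}, Λ ≠ [] → Γ ≠ [] → uplus Λ Γ = List.zipWith (· ∪ ·) Λ Γ
  | _ :: _, _ :: _, _, _ => rfl

lemma compatible_nil_left (Γ : Gen) : Compatible [] Γ := Or.inl rfl
lemma compatible_nil_right (Λ : Gen) : Compatible Λ [] := Or.inr (Or.inl rfl)
lemma compatible_of_ne {Λ Γ : Gen} (h1 : Λ ≠ []) (h2 : Γ ≠ []) :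
    Compatible Λ Γ ↔ Λ.length = Γ.length ∧ Disjoint (unionAll Λ) (unionAll Γ) := by
  unfold Compatible; tauto

lemma interAll_nil : interAll [] = ∅ := rfl

lemma mulGen_nil_left (Γ : Gen) : mulGen [] Γ = Finsupp.single Γ 1 := by
  simp [mulGen, compatible_nil_left, interAll_nil, eps_empty_left, uplus_nil_left]
lemma mulGen_nil_right (Λ : Gen) : mulGen Λ [] = Finsupp.single Λ 1 := by
  simp [mulGen, compatible_nil_right, interAll_nil, eps_empty_right, uplus_nil_right]

lemma lift_single (f : Gen → 𝔄) (Λ : Gen) :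
    Finsupp.lift 𝔄 ℚ Gen f (Finsupp.single Λ 1) = f Λ := by
  simp [Finsupp.lift_apply, Finsupp.sum_single_index]

lemma mulA_single_left (Λ : Gen) (y : 𝔄) :
    mulA (Finsupp.single Λ 1) y = Finsupp.lift 𝔄 ℚ Gen (mulGen Λ) y := by
  have : mulA (Finsupp.single Λ 1) = Finsupp.lift 𝔄 ℚ Gen (mulGen Λ) := by
    simp [mulA, Finsupp.lift_apply, Finsupp.sum_single_index]
  rw [this]

lemma mulA_single_single (Λ Γ : Gen) :
    mulA (Finsupp.single Λ 1) (Finsupp.single Γ 1) = mulGen Λ Γ := by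
  rw [mulA_single_left, lift_single]

lemma key (Λ Γ Θ : Gen) :
    mulA (mulGen Λ Γ) (Finsupp.single Θ 1) = mulA (Finsupp.single Λ 1) (mulGen Γ Θ) := by
  open Classical in
  have hL : mulA (mulGen Λ Γ) (Finsupp.single Θ 1)
      = if Compatible Λ Γ then
          ((-1 : ℚ) ^ eps (interAll Λ) (interAll Γ)) • mulGen (uplus Λ Γ) Θ else 0 := by
    unfold mulGen
    split
    · rw [map_smul, LinearMap.smul_apply, mulA_single_single]
      unfold mulGen; rfl
    · simp
  have hR : mulA (Finsupp.single Λ 1) (mulGen Γ Θ)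
      = if Compatible Γ Θ then
          ((-1 : ℚ) ^ eps (interAll Γ) (interAll Θ)) • mulGen Λ (uplus Γ Θ) else 0 := by
    conv_lhs => rw [show mulGen Γ Θ = mulGen Γ Θ from rfl]
    unfold mulGen
    split
    · rw [map_smul, mulA_single_single]
      unfold mulGen; rfl
    · simp
  rw [hL, hR]
  -- now dispatch empty cases
  rcases eq_or_ne Λ [] with rfl | hΛ
  · simp only [compatible_nil_left, if_true, interAll_nil, eps_empty_left, pow_zero, one_smul,
      uplus_nil_left, mulGen_nil_left, mulGen]
  rcases eq_or_ne Γ [] with rfl | hΓ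
  · simp only [compatible_nil_right, compatible_nil_left, if_true, interAll_nil,
      eps_empty_right, eps_empty_left, pow_zero, one_smul, uplus_nil_right, uplus_nil_left]
  rcases eq_or_ne Θ [] with rfl | hΘ
  · simp only [compatible_nil_right, if_true, interAll_nil, eps_empty_right, pow_zero, one_smul,
      uplus_nil_right, mulGen_nil_right, mulGen]
  -- all nonempty
  have hzLG : uplus Λ Γ = List.zipWith (· ∪ ·) Λ Γ := uplus_of_ne hΛ hΓ
  have hzGT : uplus Γ Θ = List.zipWith (· ∪ ·) Γ Θ := uplus_of_ne hΓ hΘ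
  by_cases P : Λ.length = Γ.length ∧ Γ.length = Θ.length ∧
      Disjoint (unionAll Λ) (unionAll Γ) ∧ Disjoint (unionAll Λ) (unionAll Θ) ∧
      Disjoint (unionAll Γ) (unionAll Θ)
  · obtain ⟨h1, h2, d12, d13, d23⟩ := P
    have hC1 : Compatible Λ Γ := (compatible_of_ne hΛ hΓ).2 ⟨h1, d12⟩
    have hC2 : Compatible Γ Θ := (compatible_of_ne hΓ hΘ).2 ⟨h2, d23⟩
    rw [if_pos hC1, if_pos hC2]
    have hzLGne : List.zipWith (· ∪ ·) Λ Γ ≠ [] := by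
      rw [← List.length_pos_iff, List.length_zipWith]
      rcases Λ with _ | ⟨a, t⟩; exact absurd rfl hΛ
      rcases Γ with _ | ⟨b, s⟩; exact absurd rfl hΓ
      simp
    have hzGTne : List.zipWith (· ∪ ·) Γ Θ ≠ [] := by
      rw [← List.length_pos_iff, List.length_zipWith]
      rcases Γ with _ | ⟨b, s⟩; exact absurd rfl hΓ
      rcases Θ with _ | ⟨c, u⟩; exact absurd rfl hΘ
      simp
    have uLG : unionAll (List.zipWith (· ∪ ·) Λ Γ) = unionAll Λ ∪ unionAll Γ :=
      unionAll_zipWith h1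
    have uGT : unionAll (List.zipWith (· ∪ ·) Γ Θ) = unionAll Γ ∪ unionAll Θ :=
      unionAll_zipWith h2
    have hC1' : Compatible (uplus Λ Γ) Θ := by
      rw [hzLG]
      refine (compatible_of_ne hzLGne hΘ).2 ⟨?_, ?_⟩
      · rw [List.length_zipWith, h1, h2]; omega
      · rw [uLG]; exact Finset.disjoint_union_left.2 ⟨d13, d23⟩
    have hC2' : Compatible Λ (uplus Γ Θ) := by
      rw [hzGT]
      refine (compatible_of_ne hΛ hzGTne).2 ⟨?_, ?_⟩
      · rw [List.length_zipWith, ← h2, ← h1]; omega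
      · rw [uGT]; exact Finset.disjoint_union_right.2 ⟨d12, d13⟩
    unfold mulGen
    rw [if_pos hC1', if_pos hC2']
    have iLG : interAll (uplus Λ Γ) = interAll Λ ∪ interAll Γ := by
      rw [hzLG]; exact interAll_zipWith hΛ h1 d12
    have iGT : interAll (uplus Γ Θ) = interAll Γ ∪ interAll Θ := by
      rw [hzGT]; exact interAll_zipWith hΓ h2 d23
    have dAB : Disjoint (interAll Λ) (interAll Γ) :=
      d12.mono (interAll_subset_unionAll hΛ) (interAll_subset_unionAll hΓ)
    have dBC : Disjoint (interAll Γ) (interAll Θ) :=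
      d23.mono (interAll_subset_unionAll hΓ) (interAll_subset_unionAll hΘ)
    have huu : uplus (uplus Λ Γ) Θ = uplus Λ (uplus Γ Θ) := by
      rw [hzLG, hzGT, uplus_of_ne hzLGne hΘ, uplus_of_ne hΛ hzGTne, zipWith_union_assoc]
    rw [iLG, iGT, huu, smul_smul, smul_smul, ← pow_add, ← pow_add,
      eps_union_left _ dAB, eps_union_right _ dBC]
    ring_nf
  · -- incompatible: both sides zero
    have Z1 : (if Compatible Λ Γ then
        ((-1 : ℚ) ^ eps (interAll Λ) (interAll Γ)) • mulGen (uplus Λ Γ) Θ else 0) = 0 := by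
      split
      case isFalse => rfl
      case isTrue hC =>
        obtain ⟨h1, d12⟩ := (compatible_of_ne hΛ hΓ).1 hC
        have : ¬ Compatible (uplus Λ Γ) Θ := by
          intro hC'
          rw [hzLG] at hC'
          have hzne : List.zipWith (· ∪ ·) Λ Γ ≠ [] := by
            rw [← List.length_pos_iff, List.length_zipWith]
            rcases Λ with _ | _; exact absurd rfl hΛ
            rcases Γ with _ | _; exact absurd rfl hΓ
            simp
          obtain ⟨hl, hd⟩ := (compatible_of_ne hzne hΘ).1 hC'
          rw [List.length_zipWith] at hl
          rw [unionAll_zipWith h1, Finset.disjoint_union_left] at hd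
          exact P ⟨h1, by omega, d12, hd.1, hd.2⟩
        rw [mulGen, if_neg this, smul_zero]
    have Z2 : (if Compatible Γ Θ then
        ((-1 : ℚ) ^ eps (interAll Γ) (interAll Θ)) • mulGen Λ (uplus Γ Θ) else 0) = 0 := by
      split
      case isFalse => rfl
      case isTrue hC =>
        obtain ⟨h2, d23⟩ := (compatible_of_ne hΓ hΘ).1 hC
        have : ¬ Compatible Λ (uplus Γ Θ) := by
          intro hC'
          rw [hzGT] at hC'
          have hzne : List.zipWith (· ∪ ·) Γ Θ ≠ [] := by
            rw [← List.length_pos_iff, List.length_zipWith]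
            rcases Γ with _ | _; exact absurd rfl hΓ
            rcases Θ with _ | _; exact absurd rfl hΘ
            simp
          obtain ⟨hl, hd⟩ := (compatible_of_ne hΛ hzne).1 hC'
          rw [List.length_zipWith] at hl
          rw [unionAll_zipWith h2, Finset.disjoint_union_right] at hd
          exact P ⟨by omega, h2, hd.1, hd.2, d23⟩
        rw [mulGen, if_neg this, smul_zero]
    rw [Z1, Z2]

/-- The product on 𝔄_* is associative. -/
theorem stmt11 (x y z : 𝔄) : mulA (mulA x y) z = mulA x (mulA y z) := by
  induction x using Finsupp.induction_linear with
  | zero => simp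
  | add f g hf hg => simp only [map_add, LinearMap.add_apply, hf, hg]
  | single Λ a =>
    induction y using Finsupp.induction_linear with
    | zero => simp
    | add f g hf hg => simp only [map_add, LinearMap.add_apply, hf, hg]
    | single Γ b =>
      induction z using Finsupp.induction_linear with
      | zero => simp
      | add f g hf hg => simp only [map_add, hf, hg]
      | single Θ c =>
        have e1 : (Finsupp.single Λ a : 𝔄) = a • Finsupp.single Λ 1 := by
          rw [Finsupp.smul_single, smul_eq_mul, mul_one]
        have e2 : (Finsupp.single Γ b : 𝔄) = b • Finsupp.single Γ 1 := by
          rw [Finsupp.smul_single, smul_eq_mul, mul_one]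
        have e3 : (Finsupp.single Θ c : 𝔄) = c • Finsupp.single Θ 1 := by
          rw [Finsupp.smul_single, smul_eq_mul, mul_one]
        rw [e1, e2, e3]
        simp only [map_smul, LinearMap.smul_apply, map_smul]
        rw [mulA_single_single, mulA_single_single, key]
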